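/- Let $V$ be a Hilbert space, $T > 0$, and $\mathcal U = H^1(0,T;V)$ with inner product $(u,v)_{\mathcal U} = \int_0^T (\dot u, \dot v)_V\,dt + (u(0), v(0))_V$. Let $\psi \in L^2(0,T;V)$ and define $u^z(t) = \int_0^T (t+1)\psi(s)\,ds - \int_0^t (t-s)\psi(s)\,ds$. Then $u^z \in \mathcal U$ and for every $v \in \mathcal U$, $(u^z, v)_{\mathcal U} = \int_0^T (\psi(t), v(t))_V\,dt$. (Explicit representation of the Riesz representer in $\mathcal U$ of the functional $v \mapsto \int_0^T (\psi(t), v(t))_V\,dt$.) -/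

import Mathlib

open MeasureTheory RealInnerProductSpace

/-- Explicit Riesz representer in `𝒰 = H¹(0,T;V)` (with inner
product `(u,v)_𝒰 = ∫₀ᵀ (u̇, v̇)_V dt + (u(0), v(0))_V`) of the functional
`v ↦ ∫₀ᵀ (ψ(t), v(t))_V dt`: with
`u^z(t) = ∫₀ᵀ (t+1) ψ(s) ds - ∫₀ᵗ (t-s) ψ(s) ds` one has `u^z ∈ 𝒰` with
derivative `(u^z)'(t) = ∫₀ᵀ ψ - ∫₀ᵗ ψ`, and `(u^z, v)_𝒰 = ∫₀ᵀ (ψ(t), v(t)) dt`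
for every `v ∈ 𝒰` (represented by `(v, v')` with `v t = v 0 + ∫₀ᵗ v'`). -/
theorem stmt_10
    {V : Type*} [NormedAddCommGroup V] [InnerProductSpace ℝ V] [CompleteSpace V]
    (T : ℝ) (hT : 0 < T) (ψ : ℝ → V) (hψ : Continuous ψ)
    (uz : ℝ → V)
    (huz : ∀ t : ℝ, uz t
      = ((∫ s in (0:ℝ)..T, (t + 1) • ψ s) - ∫ s in (0:ℝ)..t, (t - s) • ψ s))
    (v v' : ℝ → V)
    (hv'int : IntervalIntegrable v' MeasureTheory.volume 0 T)
    (hv'sq : IntervalIntegrable (fun s => ‖v' s‖ ^ 2) MeasureTheory.volume 0 T)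
    (hrep : ∀ t ∈ Set.Icc (0:ℝ) T, v t = v 0 + ∫ s in (0:ℝ)..t, v' s) :
    (∀ t : ℝ, HasDerivAt uz ((∫ s in (0:ℝ)..T, ψ s) - ∫ s in (0:ℝ)..t, ψ s) t) ∧
    (∫ t in (0:ℝ)..T, ⟪(∫ s in (0:ℝ)..T, ψ s) - ∫ s in (0:ℝ)..t, ψ s, v' t⟫)
        + ⟪uz 0, v 0⟫
      = ∫ t in (0:ℝ)..T, ⟪ψ t, v t⟫ := by
  have hT' : (0:ℝ) ≤ T := hT.le
  set C : V := ∫ s in (0:ℝ)..T, ψ s with hC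
  have hψi : ∀ a b : ℝ, IntervalIntegrable ψ volume a b := fun a b => hψ.intervalIntegrable a b
  have hA : ∀ t : ℝ, HasDerivAt (fun u => ∫ s in (0:ℝ)..u, ψ s) (ψ t) t := fun t =>
    intervalIntegral.integral_hasDerivAt_right (hψi 0 t)
      (hψ.stronglyMeasurable.stronglyMeasurableAtFilter) hψ.continuousAt
  have hψs : Continuous (fun s : ℝ => s • ψ s) := continuous_id.smul hψ
  have huz2 : uz = fun t => (t + 1) • C -
      (t • (∫ s in (0:ℝ)..t, ψ s) - ∫ s in (0:ℝ)..t, s • ψ s) := by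
    funext t
    rw [huz t, intervalIntegral.integral_smul]
    congr 1
    rw [← intervalIntegral.integral_smul, ← intervalIntegral.integral_sub (f := fun s => t • ψ s)
      ((hψ.const_smul t).intervalIntegrable _ _) (hψs.intervalIntegrable _ _)]
    apply intervalIntegral.integral_congr
    intro s _
    simp [sub_smul]
  have hderiv : ∀ t : ℝ, HasDerivAt uz (C - ∫ s in (0:ℝ)..t, ψ s) t := by
    intro t
    rw [huz2]
    have h1 : HasDerivAt (fun u : ℝ => (u + 1) • C) ((1:ℝ) • C) t :=
      ((hasDerivAt_id t).add_const 1).smul_const C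
    have h3 : HasDerivAt (fun u : ℝ => u • (∫ s in (0:ℝ)..u, ψ s))
        (t • ψ t + (1:ℝ) • (∫ s in (0:ℝ)..t, ψ s)) t :=
      (hasDerivAt_id t).smul (hA t)
    have h4 : HasDerivAt (fun u : ℝ => ∫ s in (0:ℝ)..u, s • ψ s) (t • ψ t) t :=
      intervalIntegral.integral_hasDerivAt_right (hψs.intervalIntegrable _ _)
        (hψs.stronglyMeasurable.stronglyMeasurableAtFilter) hψs.continuousAt
    have := h1.sub (h3.sub h4)
    convert this using 1
    · rfl
    · simp
  refine ⟨hderiv, ?_⟩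
  have huz0 : uz 0 = C := by
    rw [huz 0]
    simp
    rfl
  rw [huz0]
  -- abbreviations
  set μ : Measure ℝ := volume.restrict (Set.Ioc (0:ℝ) T) with hμ
  haveI : IsFiniteMeasure μ := by
    constructor
    rw [hμ, Measure.restrict_apply_univ]
    exact measure_Ioc_lt_top
  set P : ℝ → V := fun t => ∫ s in (0:ℝ)..t, v' s with hP
  have hPcont : ContinuousOn P (Set.uIcc (0:ℝ) T) :=
    intervalIntegral.continuousOn_primitive_interval' hv'int Set.left_mem_uIcc
  -- the kernel and its integrability on the product
  set g : ℝ × ℝ → ℝ := fun p => ⟪ψ p.1, v' p.2⟫ with hg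
  set S : Set (ℝ × ℝ) := {p | p.2 ≤ p.1} with hS
  have hSm : MeasurableSet S := (isClosed_le continuous_snd continuous_fst).measurableSet
  set f : ℝ → ℝ → ℝ := fun t s => S.indicator g (t, s) with hf
  obtain ⟨M, hM⟩ : ∃ M, ∀ x ∈ Set.Icc (0:ℝ) T, ‖ψ x‖ ≤ M :=
    isCompact_Icc.exists_bound_of_continuousOn hψ.continuousOn
  have hv'μ : Integrable v' μ := hv'int.1
  have hgm : AEStronglyMeasurable g (μ.prod μ) :=
    ((hψ.comp continuous_fst).aestronglyMeasurable).inner hv'μ.aestronglyMeasurable.comp_snd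
  have hae1 : ∀ᵐ p ∂(μ.prod μ), p.1 ∈ Set.Ioc (0:ℝ) T := by
    rw [ae_iff]
    have hset : {p : ℝ × ℝ | ¬ p.1 ∈ Set.Ioc (0:ℝ) T} = (Set.Ioc (0:ℝ) T)ᶜ ×ˢ Set.univ := by
      ext p; simp
    rw [hset, Measure.prod_prod, hμ, Measure.restrict_apply measurableSet_Ioc.compl]
    simp
  have hgint : Integrable g (μ.prod μ) := by
    refine Integrable.mono' ((integrable_const M).mul_prod hv'μ.norm) hgm ?_
    filter_upwards [hae1] with p hp
    calc ‖g p‖ ≤ ‖ψ p.1‖ * ‖v' p.2‖ := norm_inner_le_norm _ _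
      _ ≤ M * ‖v' p.2‖ :=
        mul_le_mul_of_nonneg_right (hM _ (Set.Ioc_subset_Icc_self hp)) (norm_nonneg _)
  have hfint : Integrable (Function.uncurry f) (μ.prod μ) := by
    have huncurry : Function.uncurry f = S.indicator g := by
      funext p; cases p; rfl
    rw [huncurry]
    exact hgint.indicator hSm
  have hswap : ∫ t, (∫ s, f t s ∂μ) ∂μ = ∫ s, (∫ t, f t s ∂μ) ∂μ :=
    integral_integral_swap hfint
  -- left sections
  have L1 : ∀ t ∈ Set.Icc (0:ℝ) T, ⟪ψ t, P t⟫ = ∫ s, f t s ∂μ := by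
    intro t ht
    have hmem : ∀ s : ℝ, f t s = (Set.Iic t).indicator (fun s => ⟪ψ t, v' s⟫) s := by
      intro s
      simp only [hf, hS, Set.indicator_apply, Set.mem_setOf_eq, Set.mem_Iic]
      rfl
    have hv't : IntervalIntegrable v' volume 0 t := by
      apply hv'int.mono_set
      rw [Set.uIcc_of_le ht.1, Set.uIcc_of_le hT']
      exact Set.Icc_subset_Icc le_rfl ht.2
    have h1 : ⟪ψ t, P t⟫ = ∫ s in (0:ℝ)..t, ⟪ψ t, v' s⟫ := by
      rw [hP]
      exact ((innerSL ℝ (ψ t)).intervalIntegral_comp_comm hv't).symm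
    rw [h1, intervalIntegral.integral_of_le ht.1]
    simp only [hmem]
    rw [hμ, integral_indicator measurableSet_Iic, Measure.restrict_restrict measurableSet_Iic]
    congr 1
    rw [Set.Iic_inter_Ioc_of_le ht.2]
  -- right sections
  have R1 : ∀ s ∈ Set.Ioc (0:ℝ) T, (∫ t, f t s ∂μ) = ⟪C - ∫ u in (0:ℝ)..s, ψ u, v' s⟫ := by
    intro s hs
    have hmem : ∀ t : ℝ, f t s = (Set.Ici s).indicator (fun t => ⟪ψ t, v' s⟫) t := by
      intro t
      simp only [hf, hS, Set.indicator_apply, Set.mem_setOf_eq, Set.mem_Ici]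
      rfl
    simp only [hmem]
    rw [hμ, integral_indicator measurableSet_Ici, Measure.restrict_restrict measurableSet_Ici]
    have hinter : Set.Ici s ∩ Set.Ioc (0:ℝ) T = Set.Icc s T := by
      ext x
      constructor
      · rintro ⟨h1, _, h3⟩; exact ⟨h1, h3⟩
      · rintro ⟨h1, h2⟩; exact ⟨h1, lt_of_lt_of_le hs.1 h1, h2⟩
    rw [hinter, integral_Icc_eq_integral_Ioc, ← intervalIntegral.integral_of_le hs.2]
    have h2 : ∀ t, ⟪ψ t, v' s⟫ = ⟪v' s, ψ t⟫ := fun t => real_inner_comm _ _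
    simp only [h2]
    have h3 := (innerSL ℝ (v' s)).intervalIntegral_comp_comm (hψi s T)
    simp only [innerSL_apply_apply] at h3
    rw [h3, ← intervalIntegral.integral_interval_sub_left (hψi 0 T) (hψi 0 s)]
    exact real_inner_comm _ _
  -- Fubini conclusion
  have hfub : (∫ t in (0:ℝ)..T, ⟪ψ t, P t⟫)
      = ∫ t in (0:ℝ)..T, ⟪C - ∫ s in (0:ℝ)..t, ψ s, v' t⟫ := by
    rw [intervalIntegral.integral_of_le hT', intervalIntegral.integral_of_le hT']
    calc ∫ t in Set.Ioc (0:ℝ) T, ⟪ψ t, P t⟫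
        = ∫ t, (∫ s, f t s ∂μ) ∂μ := by
          rw [hμ]
          exact setIntegral_congr_fun measurableSet_Ioc
            (fun t ht => L1 t (Set.Ioc_subset_Icc_self ht))
      _ = ∫ s, (∫ t, f t s ∂μ) ∂μ := hswap
      _ = ∫ s in Set.Ioc (0:ℝ) T, ⟪C - ∫ u in (0:ℝ)..s, ψ u, v' s⟫ := by
          rw [hμ]
          exact setIntegral_congr_fun measurableSet_Ioc R1
  -- constant part
  have hconst : (∫ t in (0:ℝ)..T, ⟪ψ t, v 0⟫) = ⟪C, v 0⟫ := by
    have h2 : ∀ t, ⟪ψ t, v 0⟫ = ⟪v 0, ψ t⟫ := fun t => real_inner_comm _ _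
    simp only [h2]
    have h3 := (innerSL ℝ (v 0)).intervalIntegral_comp_comm (hψi 0 T)
    simp only [innerSL_apply_apply] at h3
    rw [h3]
    exact real_inner_comm _ _
  -- integrability for splitting
  have i1 : IntervalIntegrable (fun t => ⟪ψ t, v 0⟫) volume 0 T :=
    (hψ.inner continuous_const).intervalIntegrable 0 T
  have i2 : IntervalIntegrable (fun t => ⟪ψ t, P t⟫) volume 0 T :=
    (hψ.continuousOn.inner hPcont).intervalIntegrable
  calc (∫ t in (0:ℝ)..T, ⟪C - ∫ s in (0:ℝ)..t, ψ s, v' t⟫) + ⟪C, v 0⟫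
      = (∫ t in (0:ℝ)..T, ⟪ψ t, v 0⟫) + ∫ t in (0:ℝ)..T, ⟪ψ t, P t⟫ := by
        rw [hfub, hconst]; ring
    _ = ∫ t in (0:ℝ)..T, (⟪ψ t, v 0⟫ + ⟪ψ t, P t⟫) :=
        (intervalIntegral.integral_add i1 i2).symm
    _ = ∫ t in (0:ℝ)..T, ⟪ψ t, v t⟫ := by
        apply intervalIntegral.integral_congr
        intro t ht
        rw [Set.uIcc_of_le hT'] at ht
        show ⟪ψ t, v 0⟫ + ⟪ψ t, P t⟫ = ⟪ψ t, v t⟫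
        rw [hrep t ht, inner_add_right]
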